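/- Let X be a compact metric space, α : X → X a homeomorphism, and μ an α-invariant Borel probability measure. Suppose G₁, ..., G_m are open sets and h(1), ..., h(m) ≥ N are integers such that the sets α^j(G_i) for 0 ≤ j ≤ h(i)−1 are pairwise disjoint and μ(X \ ⋃_{i,j} α^j(G_i)) = 0. Write h(i) = L(i)·n + r(i) with 0 ≤ r(i) < n and N = nK. Then the set G = ⋃_i ⋃_{s=0}^{L(i)−1} α^{sn}(G_i) satisfies: α^j(G), 0 ≤ j ≤ n−1, are pairwise disjoint, and μ(⋃_{j=0}^{n−1} α^j(G)) > 1 − 1/K. -/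

import Mathlib

open MeasureTheory

theorem stmt11 {X : Type*} [MetricSpace X] [CompactSpace X] [MeasurableSpace X] [BorelSpace X]
    (α : X ≃ₜ X) (μ : Measure X) [IsProbabilityMeasure μ] (hinv : μ.map ⇑α = μ)
    (m n K : ℕ) (hn : 0 < n) (hK : 0 < K)
    (G : Set X)
    (Gt : Fin m → Set X) (hGt : ∀ i, IsOpen (Gt i))
    (h L r : Fin m → ℕ)
    (hhLr : ∀ i, h i = L i * n + r i) (hr : ∀ i, r i < n)
    (hN : ∀ i, n * K ≤ h i)
    (hdisj : ∀ (i j : Fin m) (s t : ℕ), s < h i → t < h j → (i ≠ j ∨ s ≠ t) →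
      Disjoint ((⇑α)^[s] '' Gt i) ((⇑α)^[t] '' Gt j))
    (hcover : μ (⋃ i, ⋃ j < h i, (⇑α)^[j] '' Gt i)ᶜ = 0)
    (hGdef : G = ⋃ i, ⋃ s < L i, (⇑α)^[s * n] '' Gt i) :
    (∀ s t : ℕ, s < n → t < n → s ≠ t →
      Disjoint ((⇑α)^[s] '' G) ((⇑α)^[t] '' G)) ∧
    1 - 1 / (K : ENNReal) < μ (⋃ j < n, (⇑α)^[j] '' G) := by
  have hαm : Measurable (⇑α) := α.continuous.measurable
  have hαsm : Measurable (⇑α.symm) := α.symm.continuous.measurable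
  -- image under α^[t] is preimage under α.symm^[t]
  have himg : ∀ (t : ℕ) (E : Set X), (⇑α)^[t] '' E = ((⇑α.symm)^[t]) ⁻¹' E := by
    intro t E
    have h1 : Function.LeftInverse ((⇑α.symm)^[t]) ((⇑α)^[t]) :=
      Function.LeftInverse.iterate α.left_inv t
    have h2 : Function.RightInverse ((⇑α.symm)^[t]) ((⇑α)^[t]) :=
      Function.LeftInverse.iterate α.right_inv t
    exact congrFun (Set.image_eq_preimage_of_inverse h1 h2) E
  have hmeas : ∀ (t : ℕ) (i : Fin m), MeasurableSet ((⇑α)^[t] '' Gt i) := by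
    intro t i
    rw [himg]
    exact ((hGt i).preimage (α.symm.continuous.iterate t)).measurableSet
  -- invariance
  have hmapsymm : μ.map ⇑α.symm = μ := by
    conv_lhs => rw [← hinv]
    rw [Measure.map_map hαsm hαm]
    simp [α.symm_comp_self]
  have hiter : ∀ t : ℕ, μ.map ((⇑α.symm)^[t]) = μ := by
    intro t
    induction t with
    | zero => simp
    | succ t ih =>
      rw [Function.iterate_succ, ← Measure.map_map (hαsm.iterate t) hαsm, hmapsymm, ih]
  have hμimg : ∀ (t : ℕ) (i : Fin m), μ ((⇑α)^[t] '' Gt i) = μ (Gt i) := by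
    intro t i
    rw [himg, ← Measure.map_apply (hαsm.iterate t) (hGt i).measurableSet, hiter]
  -- bound on tower levels used in G
  have hlevel : ∀ (i : Fin m) (s' j : ℕ), s' < L i → j < n → j + s' * n < h i := by
    intro i s' j hs' hj
    have : j + s' * n < (s' + 1) * n := by
      rw [add_mul, one_mul]; omega
    have h2 : (s' + 1) * n ≤ L i * n := Nat.mul_le_mul_right n hs'
    have h3 : L i * n ≤ h i := by rw [hhLr i]; omega
    omega
  constructor
  · -- disjointness
    intro s t hs ht hst
    subst hGdef
    simp only [Set.image_iUnion]
    simp only [Set.disjoint_iUnion_left, Set.disjoint_iUnion_right]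
    intro j t' ht' i s' hs'
    rw [← Set.image_comp, ← Set.image_comp, ← Function.iterate_add, ← Function.iterate_add]
    apply hdisj i j (s + s' * n) (t + t' * n)
    · exact hlevel i s' s hs' hs
    · exact hlevel j t' t ht' ht
    · right
      intro hEq
      apply hst
      have h1 : (s + s' * n) % n = s := by
        rw [Nat.add_mul_mod_self_right, Nat.mod_eq_of_lt hs]
      have h2 : (t + t' * n) % n = t := by
        rw [Nat.add_mul_mod_self_right, Nat.mod_eq_of_lt ht]
      rw [← h1, ← h2, hEq]
  · -- measure estimate
    set U := ⋃ j < n, (⇑α)^[j] '' G with hU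
    set T := ⋃ i, ⋃ j < h i, (⇑α)^[j] '' Gt i with hT
    set R := ⋃ i, ⋃ t ∈ Finset.Ico (L i * n) (h i), (⇑α)^[t] '' Gt i with hR
    set a : Fin m → ENNReal := fun i => μ (Gt i) with ha
    -- μ T = 1
    have hμT1 : μ T = 1 := by
      refine le_antisymm prob_le_one ?_
      have : μ Set.univ ≤ μ T + μ Tᶜ := by
        rw [← Set.union_compl_self T]; exact measure_union_le _ _
      rw [hcover, add_zero] at this
      simpa using this
    -- μ T = ∑ h i * a i
    have hμTsum : μ T = ∑ i : Fin m, (h i : ENNReal) * a i := by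
      have hTeq : T = ⋃ p ∈ (Finset.univ : Finset (Fin m)).sigma
          (fun i => Finset.range (h i)), (⇑α)^[p.2] '' Gt p.1 := by
        rw [hT]
        ext x
        simp only [Set.mem_iUnion, Finset.mem_sigma, Finset.mem_univ, Finset.mem_range,
          true_and, Sigma.exists]
      rw [hTeq, measure_biUnion_finset]
      · rw [Finset.sum_sigma]
        refine Finset.sum_congr rfl fun i _ => ?_
        rw [Finset.sum_congr rfl (fun t _ => hμimg t i), Finset.sum_const,
          Finset.card_range, nsmul_eq_mul]
      · intro p hp q hq hpq
        simp only [Finset.coe_sigma, Set.mem_sigma_iff, Finset.mem_coe, Finset.mem_range] at hp hq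
        apply hdisj p.1 q.1 p.2 q.2 hp.2 hq.2
        by_cases hfst : p.1 = q.1
        · right
          intro hsnd
          exact hpq (Sigma.ext hfst (heq_of_eq hsnd))
        · left; exact hfst
      · intro p _
        exact hmeas p.2 p.1
    -- μ Uᶜ ≤ ∑ r i * a i
    have hTsub : T ⊆ U ∪ R := by
      intro x hx
      rw [hT] at hx
      simp only [Set.mem_iUnion] at hx
      obtain ⟨i, t, ht, hx⟩ := hx
      by_cases hcase : t < L i * n
      · left
        have hj : t % n < n := Nat.mod_lt _ hn
        have hs : t / n < L i := (Nat.div_lt_iff_lt_mul hn).2 hcase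
        have heq : (⇑α)^[t] '' Gt i = (⇑α)^[t % n] '' ((⇑α)^[t / n * n] '' Gt i) := by
          rw [← Set.image_comp, ← Function.iterate_add]
          rw [Nat.mod_add_div' t n]
        rw [heq] at hx
        have hsubG : (⇑α)^[t / n * n] '' Gt i ⊆ G := by
          rw [hGdef]
          intro y hy
          simp only [Set.mem_iUnion]
          exact ⟨i, t / n, hs, hy⟩
        rw [hU]
        simp only [Set.mem_iUnion]
        exact ⟨t % n, hj, Set.image_mono hsubG hx⟩
      · right
        rw [hR]
        simp only [Set.mem_iUnion, Finset.mem_Ico]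
        exact ⟨i, t, ⟨le_of_not_gt hcase, ht⟩, hx⟩
    have hμUc : μ Uᶜ ≤ ∑ i : Fin m, (r i : ENNReal) * a i := by
      have hUcsub : Uᶜ ⊆ Tᶜ ∪ R := by
        intro x hx
        by_cases hxT : x ∈ T
        · rcases hTsub hxT with hU' | hR'
          · exact absurd hU' hx
          · exact Or.inr hR'
        · exact Or.inl hxT
      calc μ Uᶜ ≤ μ (Tᶜ ∪ R) := measure_mono hUcsub
        _ ≤ μ Tᶜ + μ R := measure_union_le _ _
        _ = μ R := by rw [hcover]; simp [hT]
        _ ≤ ∑' i : Fin m, μ (⋃ t ∈ Finset.Ico (L i * n) (h i), (⇑α)^[t] '' Gt i) :=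
            measure_iUnion_le _
        _ = ∑ i : Fin m, μ (⋃ t ∈ Finset.Ico (L i * n) (h i), (⇑α)^[t] '' Gt i) :=
            tsum_fintype _
        _ ≤ ∑ i : Fin m, ∑ t ∈ Finset.Ico (L i * n) (h i), μ ((⇑α)^[t] '' Gt i) :=
            Finset.sum_le_sum fun i _ => measure_biUnion_finset_le _ _
        _ = ∑ i : Fin m, (r i : ENNReal) * a i := by
            apply Finset.sum_congr rfl
            intro i _
            rw [Finset.sum_congr rfl (fun t _ => hμimg t i), Finset.sum_const,
              Nat.card_Ico, nsmul_eq_mul]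
            congr 2
            rw [hhLr i]; omega
    -- K * ∑ n * a i ≤ 1
    have hKsum : (K : ENNReal) * ∑ i : Fin m, (n : ENNReal) * a i ≤ 1 := by
      rw [Finset.mul_sum]
      calc ∑ i : Fin m, (K : ENNReal) * ((n : ENNReal) * a i)
          ≤ ∑ i : Fin m, (h i : ENNReal) * a i := by
            apply Finset.sum_le_sum
            intro i _
            rw [← mul_assoc]
            apply mul_le_mul_left
            have : ((n * K : ℕ) : ENNReal) ≤ ((h i : ℕ) : ENNReal) :=
              Nat.cast_le.2 (hN i)
            rw [Nat.cast_mul] at this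
            calc (K : ENNReal) * n = (n : ENNReal) * K := mul_comm _ _
              _ ≤ (h i : ENNReal) := this
        _ = μ T := hμTsum.symm
        _ ≤ 1 := prob_le_one
    have hKne0 : (K : ENNReal) ≠ 0 := Nat.cast_ne_zero.2 hK.ne'
    have hKnetop : (K : ENNReal) ≠ ⊤ := ENNReal.natCast_ne_top K
    have hna : ∑ i : Fin m, (n : ENNReal) * a i ≤ 1 / K := by
      rw [ENNReal.le_div_iff_mul_le (Or.inl hKne0) (Or.inl hKnetop)]
      rw [mul_comm]
      exact hKsum
    -- ∑ a i > 0
    have hapos : 0 < ∑ i : Fin m, a i := by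
      by_contra hcon
      push_neg at hcon
      have hzero : ∀ i ∈ (Finset.univ : Finset (Fin m)), a i = 0 := by
        intro i _
        exact le_antisymm (le_trans (Finset.single_le_sum (fun j _ => zero_le)
          (Finset.mem_univ i)) hcon) zero_le
      have : μ T = 0 := by
        rw [hμTsum]
        apply Finset.sum_eq_zero
        intro i hi
        rw [hzero i hi, mul_zero]
      rw [hμT1] at this
      exact one_ne_zero this
    -- ∑ r a < 1/K
    have hra : ∑ i : Fin m, (r i : ENNReal) * a i < 1 / K := by
      have hsum2 : (∑ i : Fin m, (r i : ENNReal) * a i) + ∑ i : Fin m, a i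
          ≤ ∑ i : Fin m, (n : ENNReal) * a i := by
        rw [← Finset.sum_add_distrib]
        apply Finset.sum_le_sum
        intro i _
        have : ((r i : ENNReal) + 1) * a i ≤ (n : ENNReal) * a i := by
          apply mul_le_mul_left
          have : ((r i + 1 : ℕ) : ENNReal) ≤ ((n : ℕ) : ENNReal) := Nat.cast_le.2 (hr i)
          simpa using this
        calc (r i : ENNReal) * a i + a i = ((r i : ENNReal) + 1) * a i := by
              rw [add_mul, one_mul]
          _ ≤ (n : ENNReal) * a i := this
      have hle : (∑ i : Fin m, (r i : ENNReal) * a i) + ∑ i : Fin m, a i ≤ 1 / K :=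
        le_trans hsum2 hna
      have hfin : (∑ i : Fin m, (r i : ENNReal) * a i) ≠ ⊤ := by
        intro htop
        have : (1 : ENNReal) / K = ⊤ := by
          apply top_le_iff.1
          calc (⊤ : ENNReal) = ⊤ + ∑ i : Fin m, a i := by rw [top_add]
            _ = (∑ i : Fin m, (r i : ENNReal) * a i) + ∑ i : Fin m, a i := by rw [htop]
            _ ≤ 1 / K := hle
        exact (ENNReal.div_lt_top ENNReal.one_ne_top hKne0).ne this
      calc ∑ i : Fin m, (r i : ENNReal) * a i
          < (∑ i : Fin m, (r i : ENNReal) * a i) + ∑ i : Fin m, a i :=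
            ENNReal.lt_add_right hfin hapos.ne'
        _ ≤ 1 / K := hle
    have hμUclt : μ Uᶜ < 1 / K := lt_of_le_of_lt hμUc hra
    -- conclude
    have hUmeas : MeasurableSet U := by
      apply MeasurableSet.iUnion
      intro j
      apply MeasurableSet.iUnion
      intro _
      rw [hGdef, Set.image_iUnion]
      apply MeasurableSet.iUnion
      intro i
      simp only [Set.image_iUnion]
      apply MeasurableSet.iUnion
      intro s
      apply MeasurableSet.iUnion
      intro _
      rw [← Set.image_comp, ← Function.iterate_add]
      exact hmeas _ i
    have hUadd : μ U + μ Uᶜ = 1 := by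
      rw [measure_add_measure_compl hUmeas, measure_univ]
    have hlt : (1 : ENNReal) < μ U + 1 / K := by
      calc (1 : ENNReal) = μ U + μ Uᶜ := hUadd.symm
        _ < μ U + 1 / K := ENNReal.add_lt_add_left (measure_ne_top μ U) hμUclt
    have hKle1 : (1 : ENNReal) / K ≤ 1 := by
      rw [ENNReal.div_le_iff_le_mul (Or.inl hKne0) (Or.inl hKnetop), one_mul]
      exact_mod_cast hK
    exact ENNReal.sub_lt_of_lt_add hKle1 hlt
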